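/- There exists a continuous linear functional T : 𝓢((Fin n → ℝ) × ℝ, ℂ) →L[ℂ] ℂ on the Schwartz space such that for every Schwartz function f one has T f = ∫_{y ∈ Y₀} (∏ i, (y i)^(r i)) • f(y, (p y)⁻¹) dy. (The paper's Lemma 6.2: the pushforward of the monomial density under y ↦ (y, p(y)⁻¹) is a tempered/Schwartz distribution.) -/

import Mathlib

open MeasureTheory Finset
open scoped NNReal ENNReal

lemma meas_zpow (k : ℤ) : Measurable fun x : ℝ => x ^ k := by
  rcases le_or_gt 0 k with h | h
  · lift k to ℕ using h
    simpa using measurable_id.pow_const k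
  · have hk : ∀ x : ℝ, x ^ k = (x ^ (-k).toNat)⁻¹ := by
      intro x
      rw [← zpow_natCast, Int.toNat_of_nonneg (by omega), zpow_neg, inv_inv]
    simp_rw [hk]
    exact (measurable_id.pow_const _).inv

lemma key_est {n : ℕ} (l : Fin n → ℕ) (r : Fin n → ℤ)
    (hlr : ∀ i, l i = 0 → 0 ≤ r i) (y : Fin n → ℝ)
    (hy : (∏ i, y i ^ l i) ≠ 0) :
    |∏ i, y i ^ r i| ≤
      ((1 + ‖y‖) * (1 + |(∏ i, y i ^ l i)⁻¹|)) ^ ((∑ i, l i + 1) * ∑ i, (r i).natAbs) := by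
  set L := ∑ i, l i with hL
  set B := (1 + ‖y‖) * (1 + |(∏ i, y i ^ l i)⁻¹|) with hB
  have hy1 : (0:ℝ) ≤ ‖y‖ := norm_nonneg y
  have hB1 : (1:ℝ) ≤ B := by
    rw [hB]
    nlinarith [abs_nonneg (∏ i, y i ^ l i)⁻¹]
  have hB0 : (0:ℝ) < B := lt_of_lt_of_le one_pos hB1
  have hcoord : ∀ i, |y i| ≤ 1 + ‖y‖ := by
    intro i
    have := norm_le_pi_norm y i
    simp only [Real.norm_eq_abs] at this
    linarith
  have hnz : ∀ j, l j ≠ 0 → y j ≠ 0 := by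
    intro j hlj h0
    exact hy (Finset.prod_eq_zero (mem_univ j) (by simp [h0, pow_eq_zero_iff hlj]))
  -- the inverse estimate
  have hinv : ∀ i, l i ≠ 0 → (|y i|)⁻¹ ≤ B ^ (L + 1) := by
    intro i hli
    have hyi : y i ≠ 0 := hnz i hli
    rcases le_or_gt 1 (|y i|) with h1 | h1
    · calc (|y i|)⁻¹ ≤ 1 := by rw [inv_le_one_iff₀]; right; exact h1
        _ ≤ B ^ (L+1) := one_le_pow₀ hB1
    · have habs : (0:ℝ) < |y i| := abs_pos.mpr hyi
      have h2 : (|y i|)⁻¹ ≤ ((|y i|) ^ (l i))⁻¹ := by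
        apply inv_anti₀ (by positivity)
        calc |y i| ^ l i ≤ |y i| ^ 1 :=
              pow_le_pow_of_le_one habs.le h1.le (by omega)
          _ = |y i| := pow_one _
      have hfac : |y i| ^ l i * ∏ j ∈ univ.erase i, |y j| ^ l j = |∏ i, y i ^ l i| := by
        rw [abs_prod]
        simp_rw [abs_pow]
        exact Finset.mul_prod_erase univ (fun j => |y j| ^ l j) (mem_univ i)
      have hprodbound : ∏ j ∈ univ.erase i, |y j| ^ l j ≤ (1 + ‖y‖) ^ L := by
        calc ∏ j ∈ univ.erase i, |y j| ^ l j
            ≤ ∏ j ∈ univ.erase i, (1 + ‖y‖) ^ l j := by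
              apply Finset.prod_le_prod
              · intro j _; positivity
              · intro j _; exact pow_le_pow_left₀ (abs_nonneg _) (hcoord j) _
          _ = (1 + ‖y‖) ^ (∑ j ∈ univ.erase i, l j) := by
              rw [Finset.prod_pow_eq_pow_sum]
          _ ≤ (1 + ‖y‖) ^ L := by
              apply pow_le_pow_right₀ (by linarith)
              exact Finset.sum_le_sum_of_subset (Finset.erase_subset i univ)
      have h3 : ((|y i|) ^ (l i))⁻¹ = |(∏ i, y i ^ l i)⁻¹| * ∏ j ∈ univ.erase i, |y j| ^ l j := by
        rw [abs_inv, ← hfac]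
        have hne : ∏ j ∈ univ.erase i, |y j| ^ l j ≠ 0 := by
          apply Finset.prod_ne_zero_iff.mpr
          intro j _
          rcases Nat.eq_zero_or_pos (l j) with h | h
          · simp [h]
          · exact pow_ne_zero _ (by simpa using hnz j (by omega))
        field_simp
      calc (|y i|)⁻¹ ≤ ((|y i|) ^ (l i))⁻¹ := h2
        _ = |(∏ i, y i ^ l i)⁻¹| * ∏ j ∈ univ.erase i, |y j| ^ l j := h3
        _ ≤ (1 + |(∏ i, y i ^ l i)⁻¹|) * (1 + ‖y‖) ^ L := by
            apply mul_le_mul (by linarith [abs_nonneg (∏ i, y i ^ l i)⁻¹]) hprodbound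
              (Finset.prod_nonneg (fun j _ => by positivity)) (by linarith [abs_nonneg (∏ i, y i ^ l i)⁻¹])
        _ ≤ B ^ (L + 1) := by
            rw [pow_succ, hB]
            have h4 : (1 + ‖y‖) ^ L ≤ B ^ L := by
              apply pow_le_pow_left₀ (by linarith) _ L
              nlinarith [abs_nonneg (∏ i, y i ^ l i)⁻¹]
            have h5 : (1 + |(∏ i, y i ^ l i)⁻¹|) ≤ B := by
              nlinarith [abs_nonneg (∏ i, y i ^ l i)⁻¹]
            calc (1 + |(∏ i, y i ^ l i)⁻¹|) * (1 + ‖y‖) ^ L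
                ≤ B * B ^ L := mul_le_mul h5 h4 (by positivity) (by linarith)
              _ = B ^ L * B := mul_comm _ _
  -- per-coordinate bound
  have hcb : ∀ i, |y i ^ r i| ≤ B ^ ((L + 1) * (r i).natAbs) := by
    intro i
    rcases le_or_gt 0 (r i) with h | h
    · rw [← Real.norm_eq_abs, norm_zpow, Real.norm_eq_abs,
        show r i = ((r i).natAbs : ℤ) from by omega, zpow_natCast]
      calc |y i| ^ (r i).natAbs ≤ B ^ (r i).natAbs := by
            apply pow_le_pow_left₀ (abs_nonneg _)
            calc |y i| ≤ 1 + ‖y‖ := hcoord i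
              _ ≤ B := by nlinarith [abs_nonneg (∏ i, y i ^ l i)⁻¹]
        _ ≤ B ^ ((L+1) * (r i).natAbs) := by
            apply pow_le_pow_right₀ hB1 (Nat.le_mul_of_pos_left _ (by omega))
    · have hli : l i ≠ 0 := fun h0 => absurd (hlr i h0) (by omega)
      have hyi : y i ≠ 0 := hnz i hli
      have : |y i ^ r i| = ((|y i|)⁻¹) ^ (r i).natAbs := by
        rw [← Real.norm_eq_abs, norm_zpow, Real.norm_eq_abs, inv_pow, ← zpow_natCast, ← zpow_neg]
        congr 1
        omega
      rw [this]
      calc ((|y i|)⁻¹) ^ (r i).natAbs ≤ (B ^ (L+1)) ^ (r i).natAbs := by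
            apply pow_le_pow_left₀ (by positivity) (hinv i hli)
        _ = B ^ ((L+1) * (r i).natAbs) := by rw [← pow_mul]
  calc |∏ i, y i ^ r i| = ∏ i, |y i ^ r i| := abs_prod _ _
    _ ≤ ∏ i, B ^ ((L+1) * (r i).natAbs) := Finset.prod_le_prod (fun i _ => abs_nonneg _) (fun i _ => hcb i)
    _ = B ^ (∑ i, (L+1) * (r i).natAbs) := Finset.prod_pow_eq_pow_sum _ _ _
    _ = B ^ ((L+1) * ∑ i, (r i).natAbs) := by rw [Finset.mul_sum]

theorem stmt_2 (n : ℕ) (l : Fin n → ℕ) (r : Fin n → ℤ)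
    (hlr : ∀ i, l i = 0 → 0 ≤ r i) :
    ∃ T : SchwartzMap ((Fin n → ℝ) × ℝ) ℂ →L[ℂ] ℂ,
      ∀ f : SchwartzMap ((Fin n → ℝ) × ℝ) ℂ,
        T f = ∫ y in {y : Fin n → ℝ | (∏ i, y i ^ l i) ≠ 0},
            (∏ i, y i ^ r i : ℝ) • f (y, (∏ i, y i ^ l i)⁻¹) := by
  classical
  set p : (Fin n → ℝ) → ℝ := fun y => ∏ i, y i ^ l i with hp_def
  set Y : Set (Fin n → ℝ) := {y : Fin n → ℝ | (∏ i, y i ^ l i) ≠ 0} with hY_def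
  set w : (Fin n → ℝ) → ℝ := fun y => ∏ i, y i ^ r i with hw_def
  set Φ : (Fin n → ℝ) → (Fin n → ℝ) × ℝ := fun y => (y, (p y)⁻¹) with hΦ_def
  have hp_meas : Measurable p :=
    Finset.measurable_prod _ fun i _ => (measurable_pi_apply i).pow_const _
  have hY_meas : MeasurableSet Y := (hp_meas (measurableSet_singleton 0)).compl
  have hΦ_meas : Measurable Φ := measurable_id.prodMk hp_meas.inv
  have hw_meas : Measurable w :=
    Finset.measurable_prod _ fun i _ => (meas_zpow (r i)).comp (measurable_pi_apply i)
  set wp : (Fin n → ℝ) → ℝ≥0 := fun y => (w y).toNNReal with hwp_def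
  set wm : (Fin n → ℝ) → ℝ≥0 := fun y => (-(w y)).toNNReal with hwm_def
  have hwp_meas : Measurable wp := hw_meas.real_toNNReal
  have hwm_meas : Measurable wm := hw_meas.neg.real_toNNReal
  set ν : Measure (Fin n → ℝ) := volume.restrict Y with hν_def
  set μp : Measure ((Fin n → ℝ) × ℝ) :=
    (ν.withDensity fun y => (wp y : ℝ≥0∞)).map Φ with hμp_def
  set μm : Measure ((Fin n → ℝ) × ℝ) :=
    (ν.withDensity fun y => (wm y : ℝ≥0∞)).map Φ with hμm_def
  set K : ℕ := (∑ i, l i + 1) * ∑ i, (r i).natAbs with hK_def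
  set N : ℕ := 2 * K + n + 1 with hN_def
  have hg_cont : Continuous fun x : (Fin n → ℝ) × ℝ => (1 + ‖x‖) ^ (-(N : ℝ)) := by
    apply Continuous.rpow_const (continuous_const.add continuous_norm)
    intro x
    left
    exact (by positivity : (0:ℝ) < 1 + ‖x‖).ne'
  have hdom : Integrable (fun y : Fin n → ℝ => (1 + ‖y‖) ^ (-((n : ℝ) + 1))) ν := by
    apply Integrable.restrict
    apply integrable_one_add_norm
    rw [Module.finrank_fintype_fun_eq_card, Fintype.card_fin]
    linarith
  -- pointwise bound
  have key : ∀ v : (Fin n → ℝ) → ℝ≥0, (∀ y, (v y : ℝ) ≤ |w y|) → ∀ y ∈ Y,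
      ‖(v y : ℝ) • (1 + ‖Φ y‖) ^ (-(N : ℝ))‖ ≤ (1 + ‖y‖) ^ (-((n : ℝ) + 1)) := by
    intro v hv y hy
    have hΦ1 : ‖y‖ ≤ ‖Φ y‖ := norm_fst_le (Φ y)
    have hΦ2 : |(p y)⁻¹| ≤ ‖Φ y‖ := norm_snd_le (Φ y)
    have h01 : (0:ℝ) < 1 + ‖Φ y‖ := by positivity
    have h02 : (0:ℝ) < 1 + ‖y‖ := by positivity
    have hwK : |w y| ≤ (1 + ‖Φ y‖) ^ (2 * K) := by
      calc |w y| ≤ ((1 + ‖y‖) * (1 + |(p y)⁻¹|)) ^ K := key_est l r hlr y hy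
        _ ≤ ((1 + ‖Φ y‖) * (1 + ‖Φ y‖)) ^ K := by
            apply pow_le_pow_left₀ (by positivity)
            apply mul_le_mul (by linarith) (by linarith) (by positivity) (by linarith)
        _ = (1 + ‖Φ y‖) ^ (2 * K) := by rw [← sq, ← pow_mul]
    have hvK : (v y : ℝ) ≤ (1 + ‖Φ y‖) ^ ((2 * K : ℕ) : ℝ) := by
      rw [Real.rpow_natCast]
      exact (hv y).trans hwK
    calc ‖(v y : ℝ) • (1 + ‖Φ y‖) ^ (-(N : ℝ))‖
        = (v y : ℝ) * (1 + ‖Φ y‖) ^ (-(N : ℝ)) := by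
          rw [norm_smul, Real.norm_eq_abs, Real.norm_eq_abs, abs_of_nonneg (v y).coe_nonneg,
            abs_of_nonneg (Real.rpow_nonneg h01.le _)]
      _ ≤ (1 + ‖Φ y‖) ^ ((2 * K : ℕ) : ℝ) * (1 + ‖Φ y‖) ^ (-(N : ℝ)) :=
          mul_le_mul_of_nonneg_right hvK (Real.rpow_nonneg h01.le _)
      _ = (1 + ‖Φ y‖) ^ (((2 * K : ℕ) : ℝ) + (-(N : ℝ))) := (Real.rpow_add h01 _ _).symm
      _ = (1 + ‖Φ y‖) ^ (-((n : ℝ) + 1)) := by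
          congr 1
          rw [hN_def]
          push_cast
          ring
      _ ≤ (1 + ‖y‖) ^ (-((n : ℝ) + 1)) := by
          rw [Real.rpow_neg h01.le, Real.rpow_neg h02.le]
          apply inv_anti₀ (Real.rpow_pos_of_pos h02 _)
          exact Real.rpow_le_rpow h02.le (by linarith) (by positivity)
  -- temperate growth of the pushforward measures
  have hTG : ∀ v : (Fin n → ℝ) → ℝ≥0, Measurable v → (∀ y, (v y : ℝ) ≤ |w y|) →
      Measure.HasTemperateGrowth ((ν.withDensity fun y => (v y : ℝ≥0∞)).map Φ) := by
    intro v hvm hv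
    refine ⟨⟨N, ?_⟩⟩
    rw [integrable_map_measure hg_cont.aestronglyMeasurable hΦ_meas.aemeasurable,
      integrable_withDensity_iff_integrable_smul hvm]
    apply hdom.mono'
    · apply Measurable.aestronglyMeasurable
      simp only [NNReal.smul_def, smul_eq_mul]
      exact hvm.coe_nnreal_real.mul (hg_cont.measurable.comp hΦ_meas)
    · rw [hν_def, ae_restrict_iff' hY_meas]
      filter_upwards with y hy
      simpa [NNReal.smul_def] using key v hv y hy
  haveI ip : Measure.HasTemperateGrowth μp := by
    apply hTG wp hwp_meas
    intro y
    rw [hwp_def, Real.coe_toNNReal']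
    exact max_le (le_abs_self _) (abs_nonneg _)
  haveI im : Measure.HasTemperateGrowth μm := by
    apply hTG wm hwm_meas
    intro y
    rw [hwm_def, Real.coe_toNNReal', ← abs_neg]
    exact max_le (le_abs_self _) (abs_nonneg _)
  refine ⟨SchwartzMap.integralCLM ℂ μp - SchwartzMap.integralCLM ℂ μm, fun f => ?_⟩
  have hip : Integrable (fun y => wp y • f (Φ y)) ν := by
    have h := f.integrable (μ := μp)
    rwa [hμp_def, integrable_map_measure f.continuous.aestronglyMeasurable
      hΦ_meas.aemeasurable, integrable_withDensity_iff_integrable_smul hwp_meas] at h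
  have him : Integrable (fun y => wm y • f (Φ y)) ν := by
    have h := f.integrable (μ := μm)
    rwa [hμm_def, integrable_map_measure f.continuous.aestronglyMeasurable
      hΦ_meas.aemeasurable, integrable_withDensity_iff_integrable_smul hwm_meas] at h
  rw [ContinuousLinearMap.sub_apply, SchwartzMap.integralCLM_apply,
    SchwartzMap.integralCLM_apply, hμp_def, hμm_def,
    integral_map hΦ_meas.aemeasurable f.continuous.aestronglyMeasurable,
    integral_map hΦ_meas.aemeasurable f.continuous.aestronglyMeasurable,
    integral_withDensity_eq_integral_smul hwp_meas,
    integral_withDensity_eq_integral_smul hwm_meas,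
    ← integral_sub hip him]
  apply integral_congr_ae
  filter_upwards with y
  show wp y • f (Φ y) - wm y • f (Φ y) = w y • f (Φ y)
  rw [NNReal.smul_def, NNReal.smul_def, ← sub_smul]
  congr 1
  rw [hwp_def, hwm_def, Real.coe_toNNReal', Real.coe_toNNReal']
  exact max_zero_sub_max_neg_zero_eq_self (w y)
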